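/- Fix p₁ > 0, p₂ > 0 and σ > 0. The function g : (0,∞) → ℝ defined by g(d) = p₁·Q(d/(√2 σ) + (σ/(√2 d))·ln(p₁/p₂)) + p₂·Q(d/(√2 σ) − (σ/(√2 d))·ln(p₁/p₂)) is non-increasing on (0,∞). -/
import Mathlib

open MeasureTheory Set

noncomputable def Qfun (x : ℝ) : ℝ :=
  (Real.sqrt (2 * Real.pi))⁻¹ * ∫ t in Set.Ioi x, Real.exp (-t ^ 2 / 2)

lemma phi_integrable : Integrable (fun t : ℝ => Real.exp (-t ^ 2 / 2)) := by
  have h := integrable_exp_neg_mul_sq (by norm_num : (0:ℝ) < 1/2)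
  convert h using 2 with t
  ring_nf

lemma Qfun_hasDerivAt (x : ℝ) :
    HasDerivAt Qfun (-((Real.sqrt (2 * Real.pi))⁻¹ * Real.exp (-x ^ 2 / 2))) x := by
  set φ : ℝ → ℝ := fun t => Real.exp (-t ^ 2 / 2) with hφ
  have hint : Integrable φ := phi_integrable
  have hcont : Continuous φ := by
    apply Real.continuous_exp.comp
    continuity
  have key : ∀ y : ℝ, (∫ t in Set.Ioi y, φ t) =
      (∫ t, φ t) - ((∫ t in Set.Iic 0, φ t) + ∫ t in (0:ℝ)..y, φ t) := by
    intro y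
    have h1 : (∫ t in Set.Iic y, φ t) + (∫ t in Set.Ioi y, φ t) = ∫ t, φ t :=
      intervalIntegral.integral_Iic_add_Ioi hint.integrableOn hint.integrableOn
    have h2 : (∫ t in Set.Iic y, φ t) - (∫ t in Set.Iic 0, φ t) = ∫ t in (0:ℝ)..y, φ t :=
      intervalIntegral.integral_Iic_sub_Iic hint.integrableOn hint.integrableOn
    linarith
  have hd : HasDerivAt (fun y => ∫ t in (0:ℝ)..y, φ t) (φ x) x :=
    intervalIntegral.integral_hasDerivAt_right hint.intervalIntegrable
      (hcont.stronglyMeasurableAtFilter _ _) hcont.continuousAt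
  have h0 : HasDerivAt (fun y => (∫ t, φ t) - ((∫ t in Set.Iic 0, φ t) + ∫ t in (0:ℝ)..y, φ t))
      (0 - (0 + φ x)) x :=
    (hasDerivAt_const x _).sub ((hasDerivAt_const x _).add hd)
  have hF : HasDerivAt (fun y => ∫ t in Set.Ioi y, φ t) (0 - (0 + φ x)) x :=
    h0.congr_of_eventuallyEq (Filter.Eventually.of_forall key)
  have h2 : HasDerivAt Qfun ((Real.sqrt (2 * Real.pi))⁻¹ * (0 - (0 + φ x))) x :=
    hF.const_mul _
  convert h2 using 1
  ring

/-- The minimum Bayes detection-error weight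
`g(d) = p₁ Q(d/(√2σ) + (σ/(√2 d)) ln(p₁/p₂)) + p₂ Q(d/(√2σ) − (σ/(√2 d)) ln(p₁/p₂))`
is non-increasing in the distance `d` on `(0,∞)`. -/
theorem stmt3 (p₁ p₂ σ : ℝ) (hp₁ : 0 < p₁) (hp₂ : 0 < p₂) (hσ : 0 < σ) :
    AntitoneOn (fun d : ℝ =>
      p₁ * Qfun (d / (Real.sqrt 2 * σ) + σ / (Real.sqrt 2 * d) * Real.log (p₁ / p₂)) +
        p₂ * Qfun (d / (Real.sqrt 2 * σ) - σ / (Real.sqrt 2 * d) * Real.log (p₁ / p₂)))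
      (Set.Ioi (0 : ℝ)) := by
  set L := Real.log (p₁ / p₂) with hL
  set r := Real.sqrt 2 with hr
  have hr0 : (0:ℝ) < r := Real.sqrt_pos.mpr (by norm_num)
  have hr2 : r ^ 2 = 2 := Real.sq_sqrt (by norm_num)
  set c := (Real.sqrt (2 * Real.pi))⁻¹ with hc
  have hc0 : 0 ≤ c := inv_nonneg.mpr (Real.sqrt_nonneg _)
  set g : ℝ → ℝ := fun d =>
    p₁ * Qfun (d / (r * σ) + σ / (r * d) * L) + p₂ * Qfun (d / (r * σ) - σ / (r * d) * L)
    with hg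
  -- derivative data
  have main : ∀ d : ℝ, 0 < d → ∃ D : ℝ, HasDerivAt g D d ∧ D ≤ 0 := by
    intro d hd
    have hd0 : d ≠ 0 := ne_of_gt hd
    have hrd : r * d ≠ 0 := by positivity
    have hrσ : r * σ ≠ 0 := by positivity
    set u : ℝ := d / (r * σ) + σ / (r * d) * L with hu
    set v : ℝ := d / (r * σ) - σ / (r * d) * L with hv
    set w : ℝ := (0 * (r * d) - σ * r) / (r * d) ^ 2 with hw
    have h1 : HasDerivAt (fun x : ℝ => x / (r * σ)) (1 / (r * σ)) d := by
      simpa using (hasDerivAt_id d).div_const (r * σ)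
    have h2 : HasDerivAt (fun x : ℝ => σ / (r * x)) w d := by
      exact (hasDerivAt_const d σ).div ((hasDerivAt_const d r).mul (hasDerivAt_id d)
        |>.congr_deriv (by ring)) hrd
    have h2' : HasDerivAt (fun x : ℝ => σ / (r * x) * L) (w * L) d := h2.mul_const L
    have hud : HasDerivAt (fun x : ℝ => x / (r * σ) + σ / (r * x) * L) (1 / (r * σ) + w * L) d :=
      h1.add h2'
    have hvd : HasDerivAt (fun x : ℝ => x / (r * σ) - σ / (r * x) * L) (1 / (r * σ) - w * L) d :=
      h1.sub h2'
    have hq1 := (Qfun_hasDerivAt u).comp d hud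
    have hq2 := (Qfun_hasDerivAt v).comp d hvd
    refine ⟨_, (hq1.const_mul p₁).add (hq2.const_mul p₂), ?_⟩
    -- now show the derivative is ≤ 0
    have huv : u ^ 2 - v ^ 2 = 2 * L := by
      have : u ^ 2 - v ^ 2 = 4 * (d * (σ * L)) / (r ^ 2 * (σ * d)) := by
        rw [hu, hv]; field_simp; ring
      rw [this, hr2]
      field_simp
      ring
    set s : ℝ := u ^ 2 / 2 - L / 2 with hs
    have e1 : Real.exp (-u ^ 2 / 2) = Real.exp (-s) * Real.exp (-(L / 2)) := by
      rw [← Real.exp_add]; congr 1; rw [hs]; ring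
    have e2 : Real.exp (-v ^ 2 / 2) = Real.exp (-s) * Real.exp (L / 2) := by
      rw [← Real.exp_add]; congr 1; rw [hs]; linear_combination huv / 2
    have e3 : p₁ * Real.exp (-(L / 2)) = p₂ * Real.exp (L / 2) := by
      have hE : Real.exp L = p₁ / p₂ := Real.exp_log (div_pos hp₁ hp₂)
      have h4 : p₂ * (Real.exp (L / 2) * Real.exp (L / 2)) = p₁ := by
        rw [← Real.exp_add, show L / 2 + L / 2 = L by ring, hE]
        field_simp
      rw [Real.exp_neg]
      have hene : Real.exp (L / 2) ≠ 0 := Real.exp_ne_zero _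
      field_simp
      linarith [h4]
    have key : p₁ * (-(c * Real.exp (-u ^ 2 / 2)) * (1 / (r * σ) + w * L)) +
        p₂ * (-(c * Real.exp (-v ^ 2 / 2)) * (1 / (r * σ) - w * L)) =
        -(c * Real.exp (-s) * (p₂ * Real.exp (L / 2)) * (2 / (r * σ))) := by
      rw [e1, e2]
      have : p₁ * (-(c * (Real.exp (-s) * Real.exp (-(L / 2)))) * (1 / (r * σ) + w * L)) +
          p₂ * (-(c * (Real.exp (-s) * Real.exp (L / 2))) * (1 / (r * σ) - w * L)) =
          -(c * Real.exp (-s)) * ((p₁ * Real.exp (-(L / 2))) * (1 / (r * σ) + w * L) +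
            (p₂ * Real.exp (L / 2)) * (1 / (r * σ) - w * L)) := by ring
      rw [this, e3]
      ring
    rw [key]
    have : 0 ≤ c * Real.exp (-s) * (p₂ * Real.exp (L / 2)) * (2 / (r * σ)) := by positivity
    linarith
  have hint : interior (Set.Ioi (0:ℝ)) = Set.Ioi 0 := interior_Ioi
  have := antitoneOn_of_deriv_nonpos (convex_Ioi (0:ℝ))
    (fun x hx => by
      obtain ⟨D, hD, _⟩ := main x hx
      exact hD.continuousAt.continuousWithinAt)
    (fun x hx => by
      rw [hint] at hx
      obtain ⟨D, hD, _⟩ := main x hx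
      exact hD.differentiableAt.differentiableWithinAt)
    (fun x hx => by
      rw [hint] at hx
      obtain ⟨D, hD, hDle⟩ := main x hx
      rw [hD.deriv]
      exact hDle)
  exact this
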